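/- Let H = (A(n, 2, 0, −1))* ≅ kZ_n/J^2 with the Hopf structure given by Δ(e_i) = Σ_{j+l=i} e_j ⊗ e_l and Δ(a_i) = Σ_{j+l=i} (e_j ⊗ a_l + (−1)^l a_j ⊗ e_l). For each i, j, the k-linear map f_{i,j}: P_i ⊗ P_j → P_{i+j+1} ⊕ P_{i+j} defined on the basis by f_{i,j}(e_i ⊗ e_j) = e_{i+j}, f_{i,j}((1/2)(−1)^{j−1} e_i ⊗ a_j + (1/2) a_i ⊗ e_j) = e_{i+j+1}, f_{i,j}(e_i ⊗ a_j + (−1)^j a_i ⊗ e_j) = a_{i+j}, and f_{i,j}(a_i ⊗ a_j) = a_{i+j+1}, is an isomorphism of left H-modules. -/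

import Mathlib

/-!
STATEMENT 13: Let H = (A(n, 2, 0, −1))* ≅ kZ_n/J². For each i, j, the k-linear map
f_{i,j} : P_i ⊗ P_j → P_{i+j+1} ⊕ P_{i+j} defined on the basis by
f(e_i ⊗ e_j) = e_{i+j}, f((1/2)(−1)^{j−1} e_i ⊗ a_j + (1/2) a_i ⊗ e_j) = e_{i+j+1},
f(e_i ⊗ a_j + (−1)^j a_i ⊗ e_j) = a_{i+j}, f(a_i ⊗ a_j) = a_{i+j+1},
is an isomorphism of left H-modules (for the diagonal action of H on the tensor product).
-/

open CategoryTheory Limits TensorProduct MonoidalCategory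

/-- Right multiplication by `c`, as an endomorphism of the left regular module. -/
def rmul {H : Type} [Ring H] (c : H) : H →ₗ[H] H where
  toFun x := x * c
  map_add' x y := add_mul x y c
  map_smul' h x := mul_assoc h x c

/-- The data exhibiting a Hopf algebra `H` as `(A(n, 2, μ, -1))^*` (of nilpotent type)
`≅ kZ_n/J²`: a basis `e_i, a_i` (`i ∈ ℤ/n`) of `H` with the multiplication of the quotient
of the path algebra of the basic cycle `Z_n` by paths of length two (`e_i` the vertex
idempotents, `a_i : e_i → e_{i+1}` the arrows), and with the comultiplication and counit
determined by `Δ(e_i) = ∑_{j+l=i} e_j ⊗ e_l`,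
`Δ(a_i) = ∑_{j+l=i} (e_j ⊗ a_l + (-1)^l a_j ⊗ e_l)`, `ε(e_i) = δ_{i,0}`, `ε(a_i) = 0`. -/
structure CycleHopf (K : Type) [Field K] (n : ℕ) [NeZero n]
    (H : Type) [Ring H] [HopfAlgebra K H] where
  e : ZMod n → H
  a : ZMod n → H
  orth : ∀ i j, e i * e j = if i = j then e i else 0
  sum_e : ∑ i, e i = 1
  ae : ∀ i, a i * e i = a i
  ea : ∀ i, e (i + 1) * a i = a i
  ae' : ∀ i j, j ≠ i → a i * e j = 0
  ea' : ∀ i j, j ≠ i + 1 → e j * a i = 0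
  aa : ∀ i j, a i * a j = 0
  indep : LinearIndependent K (Sum.elim e a)
  span : Submodule.span K (Set.range (Sum.elim e a)) = ⊤
  comul_e : ∀ i, Coalgebra.comul (R := K) (e i) = ∑ j, e j ⊗ₜ[K] e (i - j)
  comul_a : ∀ i, Coalgebra.comul (R := K) (a i) =
    ∑ j, (e j ⊗ₜ[K] a (i - j) + ((-1 : K) ^ ((i - j).val)) • (a j ⊗ₜ[K] e (i - j)))
  counit_e : ∀ i, Coalgebra.counit (R := K) (e i) = if i = 0 then 1 else 0
  counit_a : ∀ i, Coalgebra.counit (R := K) (a i) = 0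

namespace CycleHopf

variable {K : Type} [Field K] {n : ℕ} [NeZero n] {H : Type} [Ring H] [HopfAlgebra K H]
variable (D : CycleHopf K n H)

/-- The indecomposable projective `P_i = He_i`. -/
def P (i : ZMod n) : Submodule H H := Submodule.span H {D.e i}

lemma mul_e_mem (i : ZMod n) (x : H) : x * D.e i ∈ D.P i := by
  apply Submodule.mem_span_singleton.2
  exact ⟨x, rfl⟩

lemma e_mem (i : ZMod n) : D.e i ∈ D.P i := by
  have := D.mul_e_mem i (D.e i)
  rwa [D.orth i i, if_pos rfl] at this

lemma a_mem (i : ZMod n) : D.a i ∈ D.P i := by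
  have := D.mul_e_mem i (D.a i)
  rwa [D.ae i] at this

lemma mul_a_mem (i : ZMod n) (x : H) : x * D.a i ∈ D.P i := by
  have h : x * D.a i = (x * D.a i) * D.e i := by rw [mul_assoc, D.ae i]
  rw [h]; exact D.mul_e_mem i _

/-- The simple module `S_i = P_i / (im a_i) = P_i / span{a_i}`. -/
def S (i : ZMod n) : Type :=
  ↥(D.P i) ⧸ (Submodule.span H {(⟨D.a i, D.a_mem i⟩ : ↥(D.P i))})

noncomputable instance (i : ZMod n) : AddCommGroup (D.S i) := by
  unfold S; infer_instance
noncomputable instance (i : ZMod n) : Module H (D.S i) := by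
  unfold S; infer_instance

end CycleHopf

section Diag
variable (K : Type) [CommRing K] (H : Type) [Ring H] [Bialgebra K H]
variable (M N : Type) [AddCommGroup M] [Module K M] [Module H M] [IsScalarTower K H M]
  [AddCommGroup N] [Module K N] [Module H N] [IsScalarTower K H N]

noncomputable def actB : H →ₗ[K] Module.End K M where
  toFun h :=
    { toFun := fun m => h • m
      map_add' := fun x y => smul_add h x y
      map_smul' := fun c x => (smul_comm c h x).symm }
  map_add' h h' := by ext m; exact add_smul h h' m
  map_smul' c h := by ext m; exact smul_assoc c h m

noncomputable def act2 : (H ⊗[K] H) →ₗ[K] Module.End K (M ⊗[K] N) :=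
  (TensorProduct.homTensorHomMap (RingHom.id K) M N M N).comp
    (TensorProduct.map (actB K H M) (actB K H N))

noncomputable def diagSmul (h : H) (z : M ⊗[K] N) : M ⊗[K] N :=
  act2 K H M N (Coalgebra.comul (R := K) h) z

end Diag


namespace CycleHopf
variable {K : Type} [Field K] {n : ℕ} [NeZero n] {H : Type} [Ring H] [HopfAlgebra K H]
variable (D : CycleHopf K n H)

/-- `e_i` as an element of `P_i`. -/
def eP (i : ZMod n) : ↥(D.P i) := ⟨D.e i, D.e_mem i⟩

/-- `a_i` as an element of `P_i`. -/
def aP (i : ZMod n) : ↥(D.P i) := ⟨D.a i, D.a_mem i⟩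

end CycleHopf

section Act2
variable {K : Type} [CommRing K] {H : Type} [Ring H] [Bialgebra K H]
variable {M N : Type} [AddCommGroup M] [Module K M] [Module H M] [IsScalarTower K H M]
  [AddCommGroup N] [Module K N] [Module H N] [IsScalarTower K H N]

lemma act2_tmul (u v : H) (x : M) (y : N) :
    act2 K H M N (u ⊗ₜ[K] v) (x ⊗ₜ[K] y) = (u • x) ⊗ₜ[K] (v • y) := by
  simp [act2, actB]
end Act2

namespace CycleHopf
variable {K : Type} [Field K] {n : ℕ} [NeZero n] {H : Type} [Ring H] [HopfAlgebra K H]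
variable (D : CycleHopf K n H)

lemma smul_e_eP (s i : ZMod n) : D.e s • D.eP i = if s = i then D.eP i else 0 := by
  apply Subtype.ext
  show D.e s * D.e i = _
  rw [D.orth]
  split_ifs with h
  · subst h; rfl
  · simp

lemma smul_a_eP (s i : ZMod n) : D.a s • D.eP i = if s = i then D.aP i else 0 := by
  apply Subtype.ext
  show D.a s * D.e i = _
  split_ifs with h
  · subst h; rw [D.ae]; rfl
  · rw [D.ae' s i (fun hh => h hh.symm)]; simp

lemma smul_e_aP (s i : ZMod n) : D.e s • D.aP i = if s = i + 1 then D.aP i else 0 := by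
  apply Subtype.ext
  show D.e s * D.a i = _
  split_ifs with h
  · subst h; rw [D.ea]; rfl
  · rw [D.ea' i s h]; simp

lemma smul_a_aP (s i : ZMod n) : D.a s • D.aP i = 0 := by
  apply Subtype.ext
  show D.a s * D.a i = _
  rw [D.aa]; simp

lemma exists_rep (i : ZMod n) (x : ↥(D.P i)) :
    ∃ c d : K, c • D.eP i + d • D.aP i = x := by
  obtain ⟨h, hh⟩ := Submodule.mem_span_singleton.1 x.2
  have hT : h ∈ Submodule.span K (Set.range (Sum.elim D.e D.a)) := by
    rw [D.span]; trivial
  have hmem : (x : H) ∈ Submodule.span K {D.e i, D.a i} := by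
    rw [← hh]
    refine Submodule.span_induction (p := fun y _ => y • D.e i ∈ Submodule.span K {D.e i, D.a i}) ?_ ?_ ?_ ?_ hT
    · rintro y ⟨s, rfl⟩
      rcases s with k | k
      · show D.e k • D.e i ∈ _
        rw [smul_eq_mul, D.orth]
        split_ifs with hk
        · subst hk; exact Submodule.subset_span (by simp)
        · exact Submodule.zero_mem _
      · show D.a k • D.e i ∈ _
        rw [smul_eq_mul]
        by_cases hk : k = i
        · subst hk; rw [D.ae]; exact Submodule.subset_span (by simp)
        · rw [D.ae' k i (fun hh' => hk hh'.symm)]; exact Submodule.zero_mem _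
    · simp
    · intro y z _ _ hy hz; rw [add_smul]; exact Submodule.add_mem _ hy hz
    · intro c y _ hy; rw [smul_assoc]; exact Submodule.smul_mem _ _ hy
  obtain ⟨c, d, hcd⟩ := Submodule.mem_span_pair.1 hmem
  exact ⟨c, d, Subtype.ext hcd⟩

end CycleHopf
namespace CycleHopf
variable {K : Type} [Field K] {n : ℕ} [NeZero n] {H : Type} [Ring H] [HopfAlgebra K H]
variable (D : CycleHopf K n H)

lemma span_tensor (i j : ZMod n) (z : ↥(D.P i) ⊗[K] ↥(D.P j)) :
    z ∈ Submodule.span K {D.eP i ⊗ₜ[K] D.eP j, D.eP i ⊗ₜ[K] D.aP j,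
      D.aP i ⊗ₜ[K] D.eP j, D.aP i ⊗ₜ[K] D.aP j} := by
  induction z using TensorProduct.induction_on with
  | zero => exact Submodule.zero_mem _
  | tmul x y =>
    obtain ⟨c, d, hx⟩ := D.exists_rep i x
    obtain ⟨c', d', hy⟩ := D.exists_rep j y
    rw [← hx, ← hy]
    simp only [TensorProduct.add_tmul, TensorProduct.tmul_add, TensorProduct.smul_tmul_smul]
    refine Submodule.add_mem _ (Submodule.add_mem _ ?_ ?_) (Submodule.add_mem _ ?_ ?_) <;>
      exact Submodule.smul_mem _ _ (Submodule.subset_span (by simp))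
  | add x y hx hy => exact Submodule.add_mem _ hx hy

noncomputable def bP (i : ZMod n)  : Module.Basis (Fin 2) K ↥(D.P i) :=
  Module.Basis.mk (v := ![D.eP i, D.aP i])
    (by
      have hg : Function.Injective
          (fun t : Fin 2 => if t = 0 then (Sum.inl i : ZMod n ⊕ ZMod n) else Sum.inr i) := by
        intro a b hab; fin_cases a <;> fin_cases b <;> simp_all
      have h1 := D.indep.comp _ hg
      have h2 : (((D.P i).subtype.restrictScalars K) ∘ ![D.eP i, D.aP i]) =
          (Sum.elim D.e D.a ∘
            (fun t : Fin 2 => if t = 0 then (Sum.inl i : ZMod n ⊕ ZMod n) else Sum.inr i)) := by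
        funext t; fin_cases t <;> rfl
      exact LinearIndependent.of_comp ((D.P i).subtype.restrictScalars K) (h2 ▸ h1))
    (by
      rintro x -
      obtain ⟨c, d, h⟩ := D.exists_rep i x
      rw [← h]
      refine Submodule.add_mem _ (Submodule.smul_mem _ _ ?_) (Submodule.smul_mem _ _ ?_) <;>
        apply Submodule.subset_span
      · exact ⟨0, rfl⟩
      · exact ⟨1, rfl⟩)

lemma finrank_P (i : ZMod n) : Module.finrank K ↥(D.P i) = 2 := by
  rw [Module.finrank_eq_card_basis (D.bP i), Fintype.card_fin]

lemma act_e (i j m : ZMod n) (x : ↥(D.P i)) (y : ↥(D.P j)) :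
    act2 K H ↥(D.P i) ↥(D.P j) (Coalgebra.comul (R := K) (D.e m)) (x ⊗ₜ[K] y)
      = ∑ s, (D.e s • x) ⊗ₜ[K] (D.e (m - s) • y) := by
  rw [D.comul_e, map_sum, LinearMap.sum_apply]
  exact Finset.sum_congr rfl fun s _ => act2_tmul _ _ _ _

lemma act_a (i j m : ZMod n) (x : ↥(D.P i)) (y : ↥(D.P j)) :
    act2 K H ↥(D.P i) ↥(D.P j) (Coalgebra.comul (R := K) (D.a m)) (x ⊗ₜ[K] y)
      = ∑ s, ((D.e s • x) ⊗ₜ[K] (D.a (m - s) • y)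
          + ((-1 : K) ^ ((m - s).val)) • ((D.a s • x) ⊗ₜ[K] (D.e (m - s) • y))) := by
  rw [D.comul_a, map_sum, LinearMap.sum_apply]
  refine Finset.sum_congr rfl fun s _ => ?_
  rw [map_add, LinearMap.add_apply, map_smul, LinearMap.smul_apply, act2_tmul, act2_tmul]

end CycleHopf
namespace CycleHopf
variable {K : Type} [Field K] {n : ℕ} [NeZero n] {H : Type} [Ring H] [HopfAlgebra K H]
variable (D : CycleHopf K n H)

set_option synthInstance.maxHeartbeats 1000000

lemma act_e_EE (i j m : ZMod n) :
    act2 K H ↥(D.P i) ↥(D.P j) (Coalgebra.comul (R := K) (D.e m)) (D.eP i ⊗ₜ[K] D.eP j)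
      = if m = i + j then D.eP i ⊗ₜ[K] D.eP j else 0 := by
  rw [D.act_e, Finset.sum_eq_single i]
  · simp [D.smul_e_eP, TensorProduct.tmul_ite, sub_eq_iff_eq_add']
  · intro b _ hb; simp [D.smul_e_eP, hb]
  · simp

lemma act_e_EA (i j m : ZMod n) :
    act2 K H ↥(D.P i) ↥(D.P j) (Coalgebra.comul (R := K) (D.e m)) (D.eP i ⊗ₜ[K] D.aP j)
      = if m = i + j + 1 then D.eP i ⊗ₜ[K] D.aP j else 0 := by
  rw [D.act_e, Finset.sum_eq_single i]
  · have hc : (m - i = j + 1) ↔ (m = i + j + 1) := by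
      rw [sub_eq_iff_eq_add', ← add_assoc]
    simp [D.smul_e_eP, D.smul_e_aP, TensorProduct.tmul_ite, hc]
  · intro b _ hb; simp [D.smul_e_eP, hb]
  · simp

lemma act_e_AE (i j m : ZMod n) :
    act2 K H ↥(D.P i) ↥(D.P j) (Coalgebra.comul (R := K) (D.e m)) (D.aP i ⊗ₜ[K] D.eP j)
      = if m = i + j + 1 then D.aP i ⊗ₜ[K] D.eP j else 0 := by
  rw [D.act_e, Finset.sum_eq_single (i + 1)]
  · have hc : (m - (i + 1) = j) ↔ (m = i + j + 1) := by
      rw [sub_eq_iff_eq_add', add_right_comm]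
    simp [D.smul_e_eP, D.smul_e_aP, TensorProduct.tmul_ite, hc]
  · intro b _ hb; simp [D.smul_e_aP, hb]
  · simp

lemma act_e_AA (i j m : ZMod n) :
    act2 K H ↥(D.P i) ↥(D.P j) (Coalgebra.comul (R := K) (D.e m)) (D.aP i ⊗ₜ[K] D.aP j)
      = if m = i + j + 1 + 1 then D.aP i ⊗ₜ[K] D.aP j else 0 := by
  rw [D.act_e, Finset.sum_eq_single (i + 1)]
  · have hc : (m - (i + 1) = j + 1) ↔ (m = i + j + 1 + 1) := by
      rw [sub_eq_iff_eq_add']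
      constructor <;> (intro h; rw [h]; ring)
    simp [D.smul_e_aP, TensorProduct.tmul_ite, hc]
  · intro b _ hb; simp [D.smul_e_aP, hb]
  · simp

end CycleHopf
namespace CycleHopf
variable {K : Type} [Field K] {n : ℕ} [NeZero n] {H : Type} [Ring H] [HopfAlgebra K H]
variable (D : CycleHopf K n H)

set_option synthInstance.maxHeartbeats 1000000

lemma act_a_EE (i j m : ZMod n) :
    act2 K H ↥(D.P i) ↥(D.P j) (Coalgebra.comul (R := K) (D.a m)) (D.eP i ⊗ₜ[K] D.eP j)
      = if m = i + j then D.eP i ⊗ₜ[K] D.aP j + ((-1 : K) ^ j.val) • (D.aP i ⊗ₜ[K] D.eP j)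
        else 0 := by
  rw [D.act_a, Finset.sum_eq_single i]
  · by_cases hm : m = i + j
    · subst hm
      have hv : i + j - i = j := by ring
      simp [D.smul_e_eP, D.smul_a_eP, TensorProduct.tmul_ite, TensorProduct.ite_tmul, hv]
    · have h1 : ¬ (m - i = j) := fun h => hm (sub_eq_iff_eq_add'.mp h)
      simp [D.smul_e_eP, D.smul_a_eP, TensorProduct.tmul_ite, TensorProduct.ite_tmul, h1, hm]
  · intro b _ hb; simp [D.smul_e_eP, D.smul_a_eP, hb]
  · simp

lemma act_a_EA (i j m : ZMod n) :
    act2 K H ↥(D.P i) ↥(D.P j) (Coalgebra.comul (R := K) (D.a m)) (D.eP i ⊗ₜ[K] D.aP j)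
      = if m = i + j + 1 then ((-1 : K) ^ ((j + 1 : ZMod n).val)) • (D.aP i ⊗ₜ[K] D.aP j)
        else 0 := by
  rw [D.act_a, Finset.sum_eq_single i]
  · by_cases hm : m = i + j + 1
    · subst hm
      have hv : i + j + 1 - i = j + 1 := by ring
      simp [D.smul_e_eP, D.smul_e_aP, D.smul_a_eP, D.smul_a_aP,
        TensorProduct.tmul_ite, TensorProduct.ite_tmul, hv]
    · have h1 : ¬ (m - i = j + 1) := fun h => hm (by rw [sub_eq_iff_eq_add'] at h; rw [h]; ring)
      simp [D.smul_e_eP, D.smul_e_aP, D.smul_a_eP, D.smul_a_aP,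
        TensorProduct.tmul_ite, TensorProduct.ite_tmul, h1, hm]
  · intro b _ hb; simp [D.smul_e_eP, D.smul_a_eP, D.smul_a_aP, hb]
  · simp

lemma act_a_AE (i j m : ZMod n) :
    act2 K H ↥(D.P i) ↥(D.P j) (Coalgebra.comul (R := K) (D.a m)) (D.aP i ⊗ₜ[K] D.eP j)
      = if m = i + j + 1 then D.aP i ⊗ₜ[K] D.aP j else 0 := by
  rw [D.act_a, Finset.sum_eq_single (i + 1)]
  · have hc : (m - (i + 1) = j) ↔ (m = i + j + 1) := by
      rw [sub_eq_iff_eq_add', add_right_comm]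
    simp [D.smul_e_aP, D.smul_a_eP, D.smul_a_aP, TensorProduct.tmul_ite,
      TensorProduct.ite_tmul, hc]
  · intro b _ hb; simp [D.smul_e_aP, D.smul_a_aP, hb]
  · simp

lemma act_a_AA (i j m : ZMod n) :
    act2 K H ↥(D.P i) ↥(D.P j) (Coalgebra.comul (R := K) (D.a m)) (D.aP i ⊗ₜ[K] D.aP j)
      = 0 := by
  rw [D.act_a]
  simp [D.smul_a_aP]

end CycleHopf
lemma neg_one_pow_val_succ {K : Type} [Field K] {n : ℕ} [NeZero n] (hn : Even n)
    (j : ZMod n) : (-1 : K) ^ ((j + 1).val) = -(-1 : K) ^ (j.val) := by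
  obtain ⟨m, rfl⟩ := hn
  have hm : 0 < m := by
    rcases Nat.eq_zero_or_pos m with h | h
    · exfalso; exact (NeZero.ne (m + m)) (by omega)
    · exact h
  haveI : Fact (1 < m + m) := ⟨by omega⟩
  have h2 : (2 : ℕ) ∣ (m + m) := ⟨m, by ring⟩
  have hval : (j + 1).val = (j.val + 1) % (m + m) := by
    rw [ZMod.val_add, ZMod.val_one]
  have hpar : (j + 1).val % 2 = (j.val + 1) % 2 := by
    rw [hval, Nat.mod_mod_of_dvd _ h2]
  rcases Nat.even_or_odd j.val with h | h
  · have h' : Odd ((j + 1).val) := by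
      rw [Nat.odd_iff, hpar]
      have := Nat.even_iff.1 h
      omega
    rw [h'.neg_one_pow, h.neg_one_pow]
  · have h' : Even ((j + 1).val) := by
      rw [Nat.even_iff, hpar]
      have := Nat.odd_iff.1 h
      omega
    rw [h'.neg_one_pow, h.neg_one_pow, neg_neg]

set_option maxHeartbeats 1000000
set_option synthInstance.maxHeartbeats 1000000

/-- **Theorem.** The `K`-linear map `f_{i,j} : P_i ⊗[K] P_j → P_{i+j+1} ⊕ P_{i+j}`
determined on the basis by `f(e_i ⊗ e_j) = e_{i+j}`,
`f((1/2)(−1)^{j−1} e_i ⊗ a_j + (1/2) a_i ⊗ e_j) = e_{i+j+1}`,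
`f(e_i ⊗ a_j + (−1)^j a_i ⊗ e_j) = a_{i+j}` and `f(a_i ⊗ a_j) = a_{i+j+1}` is an
isomorphism of left `H`-modules, where `H` acts diagonally (via `Δ`) on the source. -/
theorem f_ij_is_H_module_iso
    (K : Type) [Field K] [IsAlgClosed K] [CharZero K]
    (n : ℕ) [NeZero n] (hn : Even n)
    (H : Type) [Ring H] [HopfAlgebra K H] [FiniteDimensional K H]
    (D : CycleHopf K n H) (i j : ZMod n) :
    ∀ f : (↥(D.P i) ⊗[K] ↥(D.P j)) →ₗ[K] (↥(D.P (i + j + 1)) × ↥(D.P (i + j))),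
      f (D.eP i ⊗ₜ[K] D.eP j) = (0, D.eP (i + j)) →
      f ((2⁻¹ * (-1 : K) ^ (j.val + 1)) • (D.eP i ⊗ₜ[K] D.aP j) +
          (2⁻¹ : K) • (D.aP i ⊗ₜ[K] D.eP j)) = (D.eP (i + j + 1), 0) →
      f (D.eP i ⊗ₜ[K] D.aP j + ((-1 : K) ^ j.val) • (D.aP i ⊗ₜ[K] D.eP j)) =
        (0, D.aP (i + j)) →
      f (D.aP i ⊗ₜ[K] D.aP j) = (D.aP (i + j + 1), 0) →
      (∀ (h : H) (z : ↥(D.P i) ⊗[K] ↥(D.P j)),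
          f (act2 K H ↥(D.P i) ↥(D.P j) (Coalgebra.comul (R := K) h) z) = h • f z) ∧
      Function.Bijective f := by
  intro f hEE hC2 hC3 hAA
  have hC2' := hC2
  have hC3' := hC3
  rw [map_add, map_smul, map_smul] at hC2
  rw [map_add, map_smul] at hC3
  have hε3 : (-1 : K) ^ (j.val * 2) = 1 := by
    rw [mul_comm, pow_mul]; norm_num
  have hu : f (D.eP i ⊗ₜ[K] D.aP j)
      = (2⁻¹ : K) • ((0 : ↥(D.P (i + j + 1))), D.aP (i + j))
        - ((-1 : K) ^ j.val) • (D.eP (i + j + 1), (0 : ↥(D.P (i + j)))) := by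
    rw [← hC2, ← hC3]
    match_scalars <;> first | ring1 | (ring_nf; rw [hε3]; norm_num)
  have hv : f (D.aP i ⊗ₜ[K] D.eP j)
      = (D.eP (i + j + 1), (0 : ↥(D.P (i + j))))
        + ((-1 : K) ^ j.val * 2⁻¹) • ((0 : ↥(D.P (i + j + 1))), D.aP (i + j)) := by
    rw [← hC2, ← hC3]
    match_scalars <;> first | ring1 | (ring_nf; rw [hε3]; norm_num)
  have hcomm : ∀ (c : K) (h : H) (x : ↥(D.P (i + j + 1)) × ↥(D.P (i + j))),
      h • (c • x) = c • (h • x) := fun c h x => (smul_comm c h x).symm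
  have hcomm1 : ∀ (c : K) (h : H) (x : ↥(D.P (i + j + 1))),
      h • (c • x) = c • (h • x) := fun c h x => (smul_comm c h x).symm
  have hcomm2 : ∀ (c : K) (h : H) (x : ↥(D.P (i + j))),
      h • (c • x) = c • (h • x) := fun c h x => (smul_comm c h x).symm
  constructor
  · intro h z
    have hT : h ∈ Submodule.span K (Set.range (Sum.elim D.e D.a)) := by
      rw [D.span]; trivial
    refine Submodule.span_induction
      (p := fun y _ => ∀ w : ↥(D.P i) ⊗[K] ↥(D.P j),
        f (act2 K H ↥(D.P i) ↥(D.P j) (Coalgebra.comul (R := K) y) w) = y • f w)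
      ?_ ?_ ?_ ?_ hT z
    · rintro y ⟨s, rfl⟩ w
      rcases s with k | k <;>
        refine Submodule.span_induction
          (p := fun w _ =>
            f (act2 K H ↥(D.P i) ↥(D.P j)
              (Coalgebra.comul (R := K) (Sum.elim D.e D.a (_))) w)
              = Sum.elim D.e D.a (_) • f w)
          ?_ ?_ ?_ ?_ (D.span_tensor i j w)
      -- case e k
      · intro w hw
        simp only [Set.mem_insert_iff, Set.mem_singleton_iff] at hw
        simp only [Sum.elim_inl]
        rcases hw with rfl | rfl | rfl | rfl
        · rw [D.act_e_EE]
          split_ifs with hk <;>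
            simp [hk, hEE, hcomm, hcomm1, hcomm2, Prod.smul_mk, D.smul_e_eP, D.smul_e_aP, Prod.ext_iff]
        · rw [D.act_e_EA]
          split_ifs with hk <;>
            simp [hk, hu, hcomm, hcomm1, hcomm2, smul_sub, Prod.smul_mk, D.smul_e_eP, D.smul_e_aP,
              Prod.ext_iff]
        · rw [D.act_e_AE]
          split_ifs with hk <;>
            simp [hk, hv, hcomm, hcomm1, hcomm2, smul_add, Prod.smul_mk, D.smul_e_eP, D.smul_e_aP,
              Prod.ext_iff]
        · rw [D.act_e_AA]
          split_ifs with hk <;>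
            simp [hk, hAA, hcomm, hcomm1, hcomm2, Prod.smul_mk, D.smul_e_eP, D.smul_e_aP, Prod.ext_iff]
      · simp
      · intro w1 w2 _ _ h1 h2
        simp only [map_add, h1, h2, smul_add]
      · intro c w _ hw
        simp only [map_smul, hw]
        rw [smul_comm]
      -- case a k
      · intro w hw
        simp only [Set.mem_insert_iff, Set.mem_singleton_iff] at hw
        simp only [Sum.elim_inr]
        rcases hw with rfl | rfl | rfl | rfl
        · rw [D.act_a_EE]
          split_ifs with hk <;>
            simp [hk, hC3', hEE, hcomm, hcomm1, hcomm2, Prod.smul_mk, D.smul_a_eP, D.smul_a_aP,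
              Prod.ext_iff]
        · rw [D.act_a_EA]
          split_ifs with hk <;>
            simp [hk, hAA, hu, neg_one_pow_val_succ hn j, hcomm, hcomm1, hcomm2, smul_sub, Prod.smul_mk,
              D.smul_a_eP, D.smul_a_aP, Prod.ext_iff]
        · rw [D.act_a_AE]
          split_ifs with hk <;>
            simp [hk, hAA, hv, hcomm, hcomm1, hcomm2, smul_add, Prod.smul_mk, D.smul_a_eP, D.smul_a_aP,
              Prod.ext_iff]
        · rw [D.act_a_AA]
          simp [hAA, Prod.smul_mk, D.smul_a_aP, Prod.ext_iff]
      · simp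
      · intro w1 w2 _ _ h1 h2
        simp only [map_add, h1, h2, smul_add]
      · intro c w _ hw
        simp only [map_smul, hw]
        rw [smul_comm]
    · intro w; simp
    · intro y1 y2 _ _ h1 h2 w
      simp only [map_add, LinearMap.add_apply, h1, h2, add_smul]
    · intro c y _ hy w
      simp only [map_smul, LinearMap.smul_apply, hy, smul_assoc]
  · haveI : Module.Finite K ↥(D.P i) := Module.Finite.of_basis (D.bP i)
    haveI : Module.Finite K ↥(D.P j) := Module.Finite.of_basis (D.bP j)
    haveI : Module.Finite K ↥(D.P (i + j + 1)) := Module.Finite.of_basis (D.bP (i + j + 1))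
    haveI : Module.Finite K ↥(D.P (i + j)) := Module.Finite.of_basis (D.bP (i + j))
    have hsurj : Function.Surjective f := by
      rw [← LinearMap.range_eq_top, eq_top_iff]
      rintro ⟨x, y⟩ -
      obtain ⟨c, d, hx⟩ := D.exists_rep _ x
      obtain ⟨c', d', hy⟩ := D.exists_rep _ y
      have hxy : (x, y) = c • ((D.eP (i + j + 1), (0 : ↥(D.P (i + j)))) :
            ↥(D.P (i + j + 1)) × ↥(D.P (i + j)))
          + d • (D.aP (i + j + 1), (0 : ↥(D.P (i + j))))
          + c' • ((0 : ↥(D.P (i + j + 1))), D.eP (i + j))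
          + d' • ((0 : ↥(D.P (i + j + 1))), D.aP (i + j)) := by
        rw [Prod.ext_iff]
        constructor <;> simp [Prod.smul_mk, ← hx, ← hy]
      rw [hxy]
      refine Submodule.add_mem _ (Submodule.add_mem _ (Submodule.add_mem _ ?_ ?_) ?_) ?_ <;>
        apply Submodule.smul_mem
      · exact ⟨_, hC2'⟩
      · exact ⟨_, hAA⟩
      · exact ⟨_, hEE⟩
      · exact ⟨_, hC3'⟩
    have hrank : Module.finrank K (↥(D.P i) ⊗[K] ↥(D.P j))
        = Module.finrank K (↥(D.P (i + j + 1)) × ↥(D.P (i + j))) := by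
      rw [Module.finrank_tensorProduct, Module.finrank_prod,
        D.finrank_P, D.finrank_P, D.finrank_P, D.finrank_P]
    exact ⟨(LinearMap.injective_iff_surjective_of_finrank_eq_finrank hrank).2 hsurj, hsurj⟩
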